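/- Let ε > 0, let N ≥ 1 be an integer, let x be a strictly ordered particle solution on [0,∞), and let φ : [0,∞) → ℝ be C¹ on (0,∞). Set ψ(r) = φ(r)/r, so ψ'(r) = (φ'(r)·r − φ(r))/r² for r > 0. Then the function t ↦ Σ_{i=0}^{N−1} φ(R_i(t))·d_i(t) = ∫_{x_0(t)}^{x_N(t)} φ(ρ^N(y,t)) dy is differentiable on [0,∞) and its derivative equals (1/ε²)·∫_ℝ ρ^N(y,t)²·ψ'(ρ^N(y,t))·( W_ε ∗ ρ^N(y,t) − ρ^N(y,t) ) dy. -/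

import Mathlib

open MeasureTheory Real Set
open scoped ENNReal

/-- Scaled Morse potential `W_ε(x) = (1/(2ε)) e^{-|x|/ε}`. -/
noncomputable def Morse (ε x : ℝ) : ℝ := (1 / (2 * ε)) * Real.exp (-|x| / ε)

/-- Derivative of the scaled Morse potential,
`W_ε'(x) = -(1/(2ε²)) sign(x) e^{-|x|/ε}`. -/
noncomputable def Morse' (ε x : ℝ) : ℝ :=
  -(1 / (2 * ε ^ 2)) * Real.sign x * Real.exp (-|x| / ε)

/-- Right-hand side of the particle ODE system:
`(1/N) ∑_{k=0}^{N-1} (W_ε(x_{k+1}-x_i) - W_ε(x_k-x_i))/(x_{k+1}-x_k)`. -/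
noncomputable def particleRHS (ε : ℝ) (N : ℕ) (x : ℕ → ℝ) (i : ℕ) : ℝ :=
  (1 / (N : ℝ)) * ∑ k ∈ Finset.range N,
    (Morse ε (x (k + 1) - x i) - Morse ε (x k - x i)) / (x (k + 1) - x k)

/-- A strictly ordered particle solution on `[0,∞)`:  a differentiable curve
`x = (x_0,…,x_N)` with `x_0(t) < ⋯ < x_N(t)` for all `t ≥ 0`, solving the particle ODE. -/
def IsParticleSol (ε : ℝ) (N : ℕ) (x : ℝ → ℕ → ℝ) : Prop :=
  (∀ t : ℝ, 0 ≤ t → ∀ i < N, x t i < x t (i + 1)) ∧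
  (∀ i ≤ N, ∀ t : ℝ, 0 ≤ t →
    HasDerivWithinAt (fun s => x s i) (particleRHS ε N (x t) i) (Set.Ici 0) t)

/-- The discrete (piecewise constant) density
`ρ^N(y,t) = ∑_{k=0}^{N-1} R_k(t) 1_{[x_k(t), x_{k+1}(t))}(y)` with `R_k = 1/(N d_k)`. -/
noncomputable def discDens (N : ℕ) (x : ℝ → ℕ → ℝ) (y t : ℝ) : ℝ :=
  ∑ k ∈ Finset.range N,
    Set.indicator (Set.Ico (x t k) (x t (k + 1)))
      (fun _ => 1 / ((N : ℝ) * (x t (k + 1) - x t k))) y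

/-- Convolution in the space variable: `(W ∗ ρ)(x) = ∫ W(x-y) ρ(y) dy`. -/
noncomputable def conv (W ρ : ℝ → ℝ) (x : ℝ) : ℝ := ∫ y, W (x - y) * ρ y

/-- Antiderivative of Morse. -/
noncomputable def Fm (ε x : ℝ) : ℝ := (1/2) * Real.sign x * (1 - Real.exp (-|x| / ε))

/-- Second antiderivative of Morse. -/
noncomputable def Gm (ε x : ℝ) : ℝ := |x|/2 - ε/2 + ε^2 * Morse ε x

lemma morse_even (ε x : ℝ) : Morse ε (-x) = Morse ε x := by simp [Morse]

lemma gplus_deriv (ε : ℝ) (hε : 0 < ε) (x : ℝ) :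
    HasDerivAt (fun y : ℝ => (1/2) * (1 - Real.exp (-y/ε)))
      ((1/(2*ε)) * Real.exp (-x/ε)) x := by
  have h1 : HasDerivAt (fun y : ℝ => -y/ε) (-(1:ℝ)/ε) x := by
    simpa using ((hasDerivAt_id x).neg.div_const ε)
  have h2 := h1.exp
  have h3 := (h2.const_sub 1).const_mul (1/2 : ℝ)
  refine h3.congr_deriv ?_
  field_simp

lemma gminus_deriv (ε : ℝ) (hε : 0 < ε) (x : ℝ) :
    HasDerivAt (fun y : ℝ => -((1/2) * (1 - Real.exp (y/ε))))
      ((1/(2*ε)) * Real.exp (x/ε)) x := by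
  have h1 : HasDerivAt (fun y : ℝ => y/ε) ((1:ℝ)/ε) x := by
    simpa using ((hasDerivAt_id x).div_const ε)
  have h3 := ((h1.exp.const_sub 1).const_mul (1/2 : ℝ)).neg
  refine h3.congr_deriv ?_
  field_simp

lemma fm_eq_plus (ε : ℝ) : ∀ y ∈ Ici (0:ℝ), Fm ε y = (1/2) * (1 - Real.exp (-y/ε)) := by
  intro y hy
  rcases eq_or_lt_of_le (mem_Ici.mp hy) with h | h
  · simp [Fm, ← h]
  · simp [Fm, Real.sign_of_pos h, abs_of_pos h]

lemma fm_eq_minus (ε : ℝ) : ∀ y ∈ Iic (0:ℝ), Fm ε y = -((1/2) * (1 - Real.exp (y/ε))) := by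
  intro y hy
  rcases eq_or_lt_of_le (mem_Iic.mp hy) with h | h
  · simp [Fm, h]
  · simp [Fm, Real.sign_of_neg h, abs_of_neg h]

lemma fm_deriv (ε : ℝ) (hε : 0 < ε) (x : ℝ) : HasDerivAt (Fm ε) (Morse ε x) x := by
  rcases lt_trichotomy x 0 with h | h | h
  · have : Morse ε x = (1/(2*ε)) * Real.exp (x/ε) := by
      simp [Morse, abs_of_neg h]
    rw [this]
    apply (gminus_deriv ε hε x).congr_of_eventuallyEq
    filter_upwards [Iio_mem_nhds h] with y hy
    exact fm_eq_minus ε y (mem_Iic.mpr (le_of_lt hy))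
  · subst h
    have h0 : Morse ε 0 = (1/(2*ε)) * Real.exp (-(0:ℝ)/ε) := by simp [Morse]
    have hp : HasDerivWithinAt (Fm ε) (Morse ε 0) (Ici 0) 0 := by
      rw [h0]
      exact ((gplus_deriv ε hε 0).hasDerivWithinAt).congr (fm_eq_plus ε)
        (fm_eq_plus ε 0 (mem_Ici.mpr (le_refl 0)))
    have hm : HasDerivWithinAt (Fm ε) (Morse ε 0) (Iic 0) 0 := by
      have h0' : Morse ε 0 = (1/(2*ε)) * Real.exp ((0:ℝ)/ε) := by simp [Morse]
      rw [h0']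
      exact ((gminus_deriv ε hε 0).hasDerivWithinAt).congr (fm_eq_minus ε)
        (fm_eq_minus ε 0 (mem_Iic.mpr (le_refl 0)))
    have := hm.union hp
    rw [Set.Iic_union_Ici] at this
    exact (hasDerivWithinAt_univ.mp this)
  · have : Morse ε x = (1/(2*ε)) * Real.exp (-x/ε) := by
      simp [Morse, abs_of_pos h]
    rw [this]
    apply (gplus_deriv ε hε x).congr_of_eventuallyEq
    filter_upwards [Ioi_mem_nhds h] with y hy
    exact fm_eq_plus ε y (mem_Ici.mpr (le_of_lt hy))

lemma gGplus_deriv (ε : ℝ) (hε : 0 < ε) (x : ℝ) :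
    HasDerivAt (fun y : ℝ => y/2 - ε/2 + ε^2 * ((1/(2*ε)) * Real.exp (-y/ε)))
      ((1/2) * (1 - Real.exp (-x/ε))) x := by
  have h1 : HasDerivAt (fun y : ℝ => -y/ε) (-(1:ℝ)/ε) x := by
    simpa using ((hasDerivAt_id x).neg.div_const ε)
  have h2 := ((h1.exp.const_mul (1/(2*ε) : ℝ)).const_mul (ε^2 : ℝ))
  have h3 : HasDerivAt (fun y : ℝ => y/2 - ε/2) (1/2 : ℝ) x := by
    simpa using ((hasDerivAt_id x).div_const 2).sub_const (ε/2)
  refine (h3.add h2).congr_deriv ?_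
  field_simp
  ring

lemma gGminus_deriv (ε : ℝ) (hε : 0 < ε) (x : ℝ) :
    HasDerivAt (fun y : ℝ => -y/2 - ε/2 + ε^2 * ((1/(2*ε)) * Real.exp (y/ε)))
      (-((1/2) * (1 - Real.exp (x/ε)))) x := by
  have h1 : HasDerivAt (fun y : ℝ => y/ε) ((1:ℝ)/ε) x := by
    simpa using ((hasDerivAt_id x).div_const ε)
  have h2 := ((h1.exp.const_mul (1/(2*ε) : ℝ)).const_mul (ε^2 : ℝ))
  have h3 : HasDerivAt (fun y : ℝ => -y/2 - ε/2) (-(1/2) : ℝ) x := by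
    have := ((hasDerivAt_id x).neg.div_const 2).sub_const (ε/2)
    norm_num at this ⊢
    exact this
  refine (h3.add h2).congr_deriv ?_
  field_simp
  ring

lemma gm_eq_plus (ε : ℝ) : ∀ y ∈ Ici (0:ℝ),
    Gm ε y = y/2 - ε/2 + ε^2 * ((1/(2*ε)) * Real.exp (-y/ε)) := by
  intro y hy
  simp [Gm, Morse, abs_of_nonneg (mem_Ici.mp hy)]

lemma gm_eq_minus (ε : ℝ) : ∀ y ∈ Iic (0:ℝ),
    Gm ε y = -y/2 - ε/2 + ε^2 * ((1/(2*ε)) * Real.exp (y/ε)) := by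
  intro y hy
  simp [Gm, Morse, abs_of_nonpos (mem_Iic.mp hy)]

lemma gm_deriv (ε : ℝ) (hε : 0 < ε) (x : ℝ) : HasDerivAt (Gm ε) (Fm ε x) x := by
  rcases lt_trichotomy x 0 with h | h | h
  · rw [fm_eq_minus ε x (mem_Iic.mpr h.le)]
    apply (gGminus_deriv ε hε x).congr_of_eventuallyEq
    filter_upwards [Iio_mem_nhds h] with y hy
    exact gm_eq_minus ε y (mem_Iic.mpr (le_of_lt hy))
  · subst h
    have hp : HasDerivWithinAt (Gm ε) (Fm ε 0) (Ici 0) 0 := by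
      rw [fm_eq_plus ε 0 (mem_Ici.mpr le_rfl)]
      exact ((gGplus_deriv ε hε 0).hasDerivWithinAt).congr (gm_eq_plus ε)
        (gm_eq_plus ε 0 (mem_Ici.mpr le_rfl))
    have hm : HasDerivWithinAt (Gm ε) (Fm ε 0) (Iic 0) 0 := by
      rw [fm_eq_minus ε 0 (mem_Iic.mpr le_rfl)]
      exact ((gGminus_deriv ε hε 0).hasDerivWithinAt).congr (gm_eq_minus ε)
        (gm_eq_minus ε 0 (mem_Iic.mpr le_rfl))
    have := hm.union hp
    rw [Set.Iic_union_Ici] at this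
    exact (hasDerivWithinAt_univ.mp this)
  · rw [fm_eq_plus ε x (mem_Ici.mpr h.le)]
    apply (gGplus_deriv ε hε x).congr_of_eventuallyEq
    filter_upwards [Ioi_mem_nhds h] with y hy
    exact gm_eq_plus ε y (mem_Ici.mpr (le_of_lt hy))

lemma morse_continuous (ε : ℝ) : Continuous (Morse ε) := by
  unfold Morse
  fun_prop

lemma gm_eq (ε : ℝ) (x : ℝ) : Gm ε x = |x|/2 - ε/2 + ε^2 * Morse ε x := rfl

lemma fm_continuous (ε : ℝ) (hε : 0 < ε) : Continuous (Fm ε) :=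
  continuous_iff_continuousAt.mpr (fun x => (fm_deriv ε hε x).continuousAt)

lemma integral_morse_sub (ε : ℝ) (hε : 0 < ε) (y a b : ℝ) :
    ∫ z in a..b, Morse ε (y - z) = Fm ε (y - a) - Fm ε (y - b) := by
  rw [intervalIntegral.integral_comp_sub_left (Morse ε) y]
  exact intervalIntegral.integral_eq_sub_of_hasDerivAt
    (fun u _ => fm_deriv ε hε u) ((morse_continuous ε).intervalIntegrable _ _)

lemma integral_fm_sub (ε : ℝ) (hε : 0 < ε) (c a b : ℝ) :
    ∫ z in a..b, Fm ε (z - c) = Gm ε (b - c) - Gm ε (a - c) := by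
  have : ∀ z : ℝ, HasDerivAt (fun w => Gm ε (w - c)) (Fm ε (z - c)) z := by
    intro z
    have := (gm_deriv ε hε (z - c)).comp z ((hasDerivAt_id z).sub_const c)
    simp only [mul_one] at this
    exact this
  exact intervalIntegral.integral_eq_sub_of_hasDerivAt (fun u _ => this u)
    (((fm_continuous ε hε).comp (continuous_id.sub continuous_const)).intervalIntegrable _ _)

lemma mono_le (a : ℕ → ℝ) (N : ℕ) (h : ∀ i < N, a i < a (i+1)) {i j : ℕ}
    (hij : i ≤ j) (hj : j ≤ N) : a i ≤ a j := by
  induction j, hij using Nat.le_induction with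
  | base => exact le_rfl
  | succ j hij ih => exact le_trans (ih (by omega)) (h j (by omega)).le

lemma dens_on (N : ℕ) (x : ℝ → ℕ → ℝ) (t : ℝ) (h : ∀ i < N, x t i < x t (i+1))
    {i : ℕ} (hi : i < N) {y : ℝ} (hy : y ∈ Ico (x t i) (x t (i+1))) :
    discDens N x y t = 1 / ((N : ℝ) * (x t (i+1) - x t i)) := by
  unfold discDens
  rw [Finset.sum_eq_single_of_mem i (Finset.mem_range.mpr hi)]
  · simp [Set.indicator_of_mem hy]
  · intro k hk hki
    apply Set.indicator_of_notMem
    intro hyk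
    rcases lt_or_gt_of_ne hki with hlt | hgt
    · have h1 : x t (k+1) ≤ x t i := mono_le (x t) N h hlt (le_of_lt hi)
      exact absurd (lt_of_lt_of_le hyk.2 (le_trans h1 hy.1)) (lt_irrefl y)
    · have h1 : x t (i+1) ≤ x t k :=
        mono_le (x t) N h hgt (le_of_lt (Finset.mem_range.mp hk))
      exact absurd (lt_of_lt_of_le hy.2 (le_trans h1 hyk.1)) (lt_irrefl y)

lemma dens_zero (N : ℕ) (x : ℝ → ℕ → ℝ) (t : ℝ) {y : ℝ}
    (h2 : ∀ i < N, y ∉ Ico (x t i) (x t (i+1))) : discDens N x y t = 0 :=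
  Finset.sum_eq_zero fun k hk =>
    Set.indicator_of_notMem (h2 k (Finset.mem_range.mp hk)) _

lemma conv_eq (ε : ℝ) (hε : 0 < ε) (N : ℕ) (x : ℝ → ℕ → ℝ) (t : ℝ)
    (h : ∀ i < N, x t i < x t (i+1)) (y : ℝ) :
    conv (Morse ε) (fun z => discDens N x z t) y
      = ∑ k ∈ Finset.range N, (1 / ((N : ℝ) * (x t (k+1) - x t k))) *
          (Fm ε (y - x t k) - Fm ε (y - x t (k+1))) := by
  unfold conv discDens
  have key : (fun z => Morse ε (y - z) *
      ∑ k ∈ Finset.range N, Set.indicator (Set.Ico (x t k) (x t (k + 1)))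
        (fun _ => 1 / ((N : ℝ) * (x t (k + 1) - x t k))) z)
      = fun z => ∑ k ∈ Finset.range N, Set.indicator (Set.Ico (x t k) (x t (k + 1)))
        (fun w => Morse ε (y - w) * (1 / ((N : ℝ) * (x t (k + 1) - x t k)))) z := by
    funext z
    rw [Finset.mul_sum]
    refine Finset.sum_congr rfl fun k _ => ?_
    by_cases hz : z ∈ Set.Ico (x t k) (x t (k+1))
    · simp [Set.indicator_of_mem hz]
    · simp [Set.indicator_of_notMem hz]
  rw [key]
  have hint : ∀ k ∈ Finset.range N, Integrable
      (Set.indicator (Set.Ico (x t k) (x t (k + 1)))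
        (fun w => Morse ε (y - w) * (1 / ((N : ℝ) * (x t (k + 1) - x t k))))) := by
    intro k _
    refine MeasureTheory.IntegrableOn.integrable_indicator ?_ measurableSet_Ico
    refine MeasureTheory.IntegrableOn.mono_set ?_ Set.Ico_subset_Icc_self
    exact (((morse_continuous ε).comp (continuous_const.sub continuous_id)).mul
      continuous_const).integrableOn_Icc
  rw [MeasureTheory.integral_finset_sum _ hint]
  refine Finset.sum_congr rfl fun k hk => ?_
  rw [MeasureTheory.integral_indicator measurableSet_Ico,
    MeasureTheory.integral_Ico_eq_integral_Ioo, ← MeasureTheory.integral_Ioc_eq_integral_Ioo,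
    ← intervalIntegral.integral_of_le (h k (Finset.mem_range.mp hk)).le,
    intervalIntegral.integral_mul_const, integral_morse_sub ε hε]
  ring

noncomputable def Hfun (ε : ℝ) (N : ℕ) (a : ℕ → ℝ) (y : ℝ) : ℝ :=
  ∑ k ∈ Finset.range N, (1 / ((N : ℝ) * (a (k+1) - a k))) *
    (Fm ε (y - a k) - Fm ε (y - a (k+1)))

lemma hfun_continuous (ε : ℝ) (hε : 0 < ε) (N : ℕ) (a : ℕ → ℝ) :
    Continuous (Hfun ε N a) := by
  unfold Hfun
  refine continuous_finset_sum _ fun k _ => continuous_const.mul ?_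
  exact ((fm_continuous ε hε).comp (continuous_id.sub continuous_const)).sub
    ((fm_continuous ε hε).comp (continuous_id.sub continuous_const))

lemma morse_sub_comm (ε a b : ℝ) : Morse ε (a - b) = Morse ε (b - a) := by
  simp [Morse, abs_sub_comm]

lemma hfun_integral (ε : ℝ) (hε : 0 < ε) (N : ℕ) (a : ℕ → ℝ) (c d : ℝ) :
    ∫ y in c..d, Hfun ε N a y
      = ∑ k ∈ Finset.range N, (1 / ((N : ℝ) * (a (k+1) - a k))) *
          ((Gm ε (d - a k) - Gm ε (c - a k)) -
            (Gm ε (d - a (k+1)) - Gm ε (c - a (k+1)))) := by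
  unfold Hfun
  have hcont : ∀ b : ℝ, Continuous fun y : ℝ => Fm ε (y - b) := fun b =>
    (fm_continuous ε hε).comp (continuous_id.sub continuous_const)
  rw [intervalIntegral.integral_finset_sum]
  · refine Finset.sum_congr rfl fun k _ => ?_
    rw [intervalIntegral.integral_const_mul,
      intervalIntegral.integral_sub ((hcont _).intervalIntegrable _ _)
        ((hcont _).intervalIntegrable _ _),
      integral_fm_sub ε hε, integral_fm_sub ε hε]
  · intro k _
    exact (continuous_const.mul ((hcont _).sub (hcont _))).intervalIntegrable _ _

lemma strip (ε : ℝ) (hε : 0 < ε) (N : ℕ) (a : ℕ → ℝ)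
    (h : ∀ i < N, a i < a (i+1)) (i : ℕ) (hi : i < N) :
    (∫ y in (a i)..(a (i+1)), Hfun ε N a y)
       - (1 / ((N:ℝ) * (a (i+1) - a i))) * (a (i+1) - a i)
      = ε^2 * (particleRHS ε N a i - particleRHS ε N a (i+1)) := by
  have hNne : (N : ℝ) ≠ 0 := by
    have : 0 < N := lt_of_le_of_lt (Nat.zero_le i) hi
    exact_mod_cast this.ne'
  have hεne : ε ≠ 0 := hε.ne'
  rw [hfun_integral ε hε]
  unfold particleRHS
  have key : ∀ k ∈ Finset.range N,
      (1 / ((N : ℝ) * (a (k+1) - a k))) *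
          ((Gm ε (a (i+1) - a k) - Gm ε (a i - a k)) -
            (Gm ε (a (i+1) - a (k+1)) - Gm ε (a i - a (k+1))))
        - ε^2 * ((1 / (N:ℝ)) *
            ((Morse ε (a (k + 1) - a i) - Morse ε (a k - a i)) / (a (k + 1) - a k) -
             (Morse ε (a (k + 1) - a (i+1)) - Morse ε (a k - a (i+1))) / (a (k + 1) - a k)))
        = if k = i then (1 / ((N:ℝ) * (a (i+1) - a i))) * (a (i+1) - a i) else 0 := by
    intro k hk
    have hkN := Finset.mem_range.mp hk
    have hdk : a k < a (k+1) := h k hkN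
    have hdkne : a (k+1) - a k ≠ 0 := sub_ne_zero.mpr hdk.ne'
    have hdi : a i < a (i+1) := h i hi
    rcases lt_trichotomy k i with hki | hki | hki
    · have e1 : a k ≤ a (i+1) := mono_le a N h (by omega) (by omega)
      have e2 : a k ≤ a i := mono_le a N h (by omega) (by omega)
      have e3 : a (k+1) ≤ a (i+1) := mono_le a N h (by omega) (by omega)
      have e4 : a (k+1) ≤ a i := mono_le a N h (by omega) (by omega)
      rw [if_neg (by omega)]
      simp only [gm_eq]
      rw [abs_of_nonneg (by linarith : (0:ℝ) ≤ a (i+1) - a k),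
        abs_of_nonneg (by linarith : (0:ℝ) ≤ a i - a k),
        abs_of_nonneg (by linarith : (0:ℝ) ≤ a (i+1) - a (k+1)),
        abs_of_nonneg (by linarith : (0:ℝ) ≤ a i - a (k+1)),
        morse_sub_comm ε (a (k+1)) (a i), morse_sub_comm ε (a k) (a i),
        morse_sub_comm ε (a (k+1)) (a (i+1)), morse_sub_comm ε (a k) (a (i+1))]
      field_simp
      ring
    · subst hki
      rw [if_pos rfl]
      simp only [sub_self]
      simp only [gm_eq]
      rw [abs_of_nonneg (by linarith : (0:ℝ) ≤ a (k+1) - a k),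
        abs_of_nonpos (by linarith : a k - a (k+1) ≤ (0:ℝ)),
        morse_sub_comm ε (a k) (a (k+1))]
      simp only [abs_zero]
      field_simp
      ring
    · have e1 : a (i+1) ≤ a k := mono_le a N h (by omega) (by omega)
      have e2 : a i ≤ a k := le_trans (by linarith) e1
      have e3 : a (i+1) ≤ a (k+1) := le_trans e1 hdk.le
      have e4 : a i ≤ a (k+1) := le_trans e2 hdk.le
      rw [if_neg (by omega)]
      simp only [gm_eq]
      rw [abs_of_nonpos (by linarith : a (i+1) - a k ≤ (0:ℝ)),
        abs_of_nonpos (by linarith : a i - a k ≤ (0:ℝ)),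
        abs_of_nonpos (by linarith : a (i+1) - a (k+1) ≤ (0:ℝ)),
        abs_of_nonpos (by linarith : a i - a (k+1) ≤ (0:ℝ)),
        morse_sub_comm ε (a (k+1)) (a i), morse_sub_comm ε (a k) (a i),
        morse_sub_comm ε (a (k+1)) (a (i+1)), morse_sub_comm ε (a k) (a (i+1))]
      field_simp
      ring
  have sum_eq := Finset.sum_congr rfl key
  rw [Finset.sum_sub_distrib, Finset.sum_ite_eq' (Finset.range N) i
    (fun _ => (1 / ((N:ℝ) * (a (i+1) - a i))) * (a (i+1) - a i)),
    if_pos (Finset.mem_range.mpr hi)] at sum_eq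
  have h2 : ∑ k ∈ Finset.range N, ε^2 * ((1 / (N:ℝ)) *
        ((Morse ε (a (k + 1) - a i) - Morse ε (a k - a i)) / (a (k + 1) - a k) -
         (Morse ε (a (k + 1) - a (i+1)) - Morse ε (a k - a (i+1))) / (a (k + 1) - a k)))
      = ε^2 * ((1 / (N:ℝ)) * ∑ k ∈ Finset.range N,
          (Morse ε (a (k + 1) - a i) - Morse ε (a k - a i)) / (a (k + 1) - a k)
        - (1 / (N:ℝ)) * ∑ k ∈ Finset.range N,
          (Morse ε (a (k + 1) - a (i+1)) - Morse ε (a k - a (i+1))) / (a (k + 1) - a k)) := by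
    rw [← Finset.mul_sum, ← Finset.mul_sum, Finset.sum_sub_distrib, mul_sub]
  linarith [sum_eq, h2]

lemma sum_ind (N : ℕ) (x : ℝ → ℕ → ℝ) (t : ℝ) (h : ∀ i < N, x t i < x t (i+1))
    {i : ℕ} (hi : i < N) {y : ℝ} (hy : y ∈ Ico (x t i) (x t (i+1)))
    (f : ℕ → ℝ → ℝ) :
    ∑ k ∈ Finset.range N, Set.indicator (Set.Ico (x t k) (x t (k+1))) (f k) y
      = f i y := by
  rw [Finset.sum_eq_single_of_mem i (Finset.mem_range.mpr hi)]
  · exact Set.indicator_of_mem hy _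
  · intro k hk hki
    apply Set.indicator_of_notMem
    intro hyk
    rcases lt_or_gt_of_ne hki with hlt | hgt
    · have h1 : x t (k+1) ≤ x t i := mono_le (x t) N h hlt (le_of_lt hi)
      exact absurd (lt_of_lt_of_le hyk.2 (le_trans h1 hy.1)) (lt_irrefl y)
    · have h1 : x t (i+1) ≤ x t k :=
        mono_le (x t) N h hgt (le_of_lt (Finset.mem_range.mp hk))
      exact absurd (lt_of_lt_of_le hy.2 (le_trans h1 hyk.1)) (lt_irrefl y)

lemma phi_dens_ae (N : ℕ) (x : ℝ → ℕ → ℝ) (t : ℝ)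
    (hmono : ∀ i < N, x t i < x t (i+1)) (φ : ℝ → ℝ) {i : ℕ} (hi : i < N) :
    (fun y => φ (discDens N x y t))
      =ᵐ[volume.restrict (Set.Ioc (x t i) (x t (i+1)))]
      (fun _ => φ (1 / ((N:ℝ) * (x t (i+1) - x t i)))) := by
  rw [Filter.EventuallyEq, MeasureTheory.ae_restrict_iff' measurableSet_Ioc]
  have h0 : ∀ᵐ (y : ℝ) ∂volume, y ≠ x t (i+1) := by
    rw [MeasureTheory.ae_iff]
    simp
  filter_upwards [h0] with y hy hmem
  rw [dens_on N x t hmono hi ⟨hmem.1.le, lt_of_le_of_ne hmem.2 hy⟩]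

lemma partA (N : ℕ) (x : ℝ → ℕ → ℝ) (t : ℝ)
    (hmono : ∀ i < N, x t i < x t (i+1)) (φ : ℝ → ℝ) :
    (∑ i ∈ Finset.range N,
        φ (1 / ((N : ℝ) * (x t (i + 1) - x t i))) * (x t (i + 1) - x t i)) =
      ∫ y in (x t 0)..(x t N), φ (discDens N x y t) := by
  have hII : ∀ k < N, IntervalIntegrable (fun y => φ (discDens N x y t))
      volume (x t k) (x t (k+1)) := by
    intro k hk
    rw [intervalIntegrable_iff_integrableOn_Ioc_of_le (hmono k hk).le]
    refine MeasureTheory.Integrable.congr ?_ (phi_dens_ae N x t hmono φ hk).symm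
    exact MeasureTheory.integrableOn_const measure_Ioc_lt_top.ne
  rw [← intervalIntegral.sum_integral_adjacent_intervals hII]
  refine Finset.sum_congr rfl fun i hi => ?_
  have hi' := Finset.mem_range.mp hi
  rw [intervalIntegral.integral_of_le (hmono i hi').le,
    MeasureTheory.integral_congr_ae (phi_dens_ae N x t hmono φ hi'),
    MeasureTheory.setIntegral_const, measureReal_def, Real.volume_Ioc,
    ENNReal.toReal_ofReal (by linarith [hmono i hi'] : (0:ℝ) ≤ x t (i+1) - x t i),
    smul_eq_mul, mul_comm]

/-- main uniform estimate. For `φ` of class `C¹` on `(0,∞)` and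
`ψ(r) = φ(r)/r`, the functional `t ↦ ∑_{i<N} φ(R_i(t)) d_i(t) = ∫_{x_0(t)}^{x_N(t)} φ(ρ^N(y,t)) dy`
is differentiable with derivative
`(1/ε²) ∫ ρ^N(y,t)² ψ'(ρ^N(y,t)) (W_ε ∗ ρ^N(y,t) - ρ^N(y,t)) dy`,
where `ψ'(r) = (φ'(r) r - φ(r))/r²`. -/
theorem stmt7 (ε : ℝ) (hε : 0 < ε) (N : ℕ) (hN : 1 ≤ N) (x : ℝ → ℕ → ℝ)
    (hx : IsParticleSol ε N x) (φ φ' : ℝ → ℝ)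
    (hφ : ∀ r : ℝ, 0 < r → HasDerivAt φ (φ' r) r)
    (hφ' : ContinuousOn φ' (Set.Ioi 0)) :
    ∀ t : ℝ, 0 ≤ t →
      ((∑ i ∈ Finset.range N,
          φ (1 / ((N : ℝ) * (x t (i + 1) - x t i))) * (x t (i + 1) - x t i)) =
        ∫ y in (x t 0)..(x t N), φ (discDens N x y t)) ∧
      HasDerivWithinAt
        (fun s => ∑ i ∈ Finset.range N,
          φ (1 / ((N : ℝ) * (x s (i + 1) - x s i))) * (x s (i + 1) - x s i))
        ((1 / ε ^ 2) * ∫ y,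
          (discDens N x y t) ^ 2 *
            ((φ' (discDens N x y t) * discDens N x y t - φ (discDens N x y t)) /
              (discDens N x y t) ^ 2) *
            (conv (Morse ε) (fun z => discDens N x z t) y - discDens N x y t))
        (Set.Ici 0) t := by
  obtain ⟨hmono_all, hode⟩ := hx
  intro t ht
  have hmono := hmono_all t ht
  have hNne : (N : ℝ) ≠ 0 := Nat.cast_ne_zero.mpr (by omega)
  have hεne : ε ≠ 0 := hε.ne'
  refine ⟨partA N x t hmono φ, ?_⟩
  have hsummand : ∀ i ∈ Finset.range N,
      HasDerivWithinAt
        (fun s => φ (1 / ((N:ℝ) * (x s (i+1) - x s i))) * (x s (i+1) - x s i))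
        (φ' (((N:ℝ) * (x t (i+1) - x t i))⁻¹) *
            (-((N:ℝ) * (particleRHS ε N (x t) (i+1) - particleRHS ε N (x t) i)) /
              ((N:ℝ) * (x t (i+1) - x t i)) ^ 2) * (x t (i+1) - x t i)
          + φ (((N:ℝ) * (x t (i+1) - x t i))⁻¹) *
              (particleRHS ε N (x t) (i+1) - particleRHS ε N (x t) i))
        (Set.Ici 0) t := by
    intro i hi
    have hiN := Finset.mem_range.mp hi
    have hd : HasDerivWithinAt (fun s => x s (i+1) - x s i)
        (particleRHS ε N (x t) (i+1) - particleRHS ε N (x t) i) (Set.Ici 0) t :=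
      (hode (i+1) (by omega) t ht).sub (hode i (by omega) t ht)
    have hdpos : 0 < x t (i+1) - x t i := sub_pos.mpr (hmono i hiN)
    have hne : (N:ℝ) * (x t (i+1) - x t i) ≠ 0 := by
      exact mul_ne_zero hNne hdpos.ne'
    have hNd : HasDerivWithinAt (fun s => (N:ℝ) * (x s (i+1) - x s i))
        ((N:ℝ) * (particleRHS ε N (x t) (i+1) - particleRHS ε N (x t) i))
        (Set.Ici 0) t := hd.const_mul _
    have hinv := hNd.inv hne
    have hpos : 0 < ((N:ℝ) * (x t (i+1) - x t i))⁻¹ := by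
      have : 0 < (N:ℝ) := by positivity
      positivity
    have hφc := (hφ _ hpos).comp_hasDerivWithinAt t hinv
    have hmul := hφc.mul hd
    simp only [one_div]
    exact hmul
  have hval : (1 / ε ^ 2) * (∫ y,
        (discDens N x y t) ^ 2 *
          ((φ' (discDens N x y t) * discDens N x y t - φ (discDens N x y t)) /
            (discDens N x y t) ^ 2) *
          (conv (Morse ε) (fun z => discDens N x z t) y - discDens N x y t))
      = ∑ i ∈ Finset.range N,
        (φ' (((N:ℝ) * (x t (i+1) - x t i))⁻¹) *
            (-((N:ℝ) * (particleRHS ε N (x t) (i+1) - particleRHS ε N (x t) i)) /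
              ((N:ℝ) * (x t (i+1) - x t i)) ^ 2) * (x t (i+1) - x t i)
          + φ (((N:ℝ) * (x t (i+1) - x t i))⁻¹) *
              (particleRHS ε N (x t) (i+1) - particleRHS ε N (x t) i)) := by
    have hgval : (fun y =>
        (discDens N x y t) ^ 2 *
          ((φ' (discDens N x y t) * discDens N x y t - φ (discDens N x y t)) /
            (discDens N x y t) ^ 2) *
          (conv (Morse ε) (fun z => discDens N x z t) y - discDens N x y t))
        = fun y => ∑ i ∈ Finset.range N,
            Set.indicator (Set.Ico (x t i) (x t (i+1)))
              (fun w =>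
                (φ' (1 / ((N:ℝ) * (x t (i+1) - x t i))) * (1 / ((N:ℝ) * (x t (i+1) - x t i)))
                  - φ (1 / ((N:ℝ) * (x t (i+1) - x t i)))) *
                (Hfun ε N (x t) w - 1 / ((N:ℝ) * (x t (i+1) - x t i)))) y := by
      funext y
      by_cases hex : ∃ i, i < N ∧ y ∈ Set.Ico (x t i) (x t (i+1))
      · obtain ⟨i, hiN, hy⟩ := hex
        rw [sum_ind N x t hmono hiN hy, dens_on N x t hmono hiN hy,
          conv_eq ε hε N x t hmono y]
        have hA : (1 / ((N:ℝ) * (x t (i+1) - x t i))) ≠ 0 := by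
          have hdpos : 0 < x t (i+1) - x t i := sub_pos.mpr (hmono i hiN)
          have : 0 < (N:ℝ) := by positivity
          positivity
        have hGm : (∑ k ∈ Finset.range N, (1 / ((N : ℝ) * (x t (k+1) - x t k))) *
            (Fm ε (y - x t k) - Fm ε (y - x t (k+1)))) = Hfun ε N (x t) y := rfl
        rw [hGm]
        have h2 : (1 / ((N:ℝ) * (x t (i+1) - x t i)))^2 *
            ((φ' (1 / ((N:ℝ) * (x t (i+1) - x t i))) * (1 / ((N:ℝ) * (x t (i+1) - x t i)))
              - φ (1 / ((N:ℝ) * (x t (i+1) - x t i)))) /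
              (1 / ((N:ℝ) * (x t (i+1) - x t i)))^2)
            = (φ' (1 / ((N:ℝ) * (x t (i+1) - x t i))) * (1 / ((N:ℝ) * (x t (i+1) - x t i)))
              - φ (1 / ((N:ℝ) * (x t (i+1) - x t i)))) := by
          have hdpos : 0 < x t (i+1) - x t i := sub_pos.mpr (hmono i hiN)
          have hne2 : ((N:ℝ) * (x t (i+1) - x t i)) ^ 2 ≠ 0 := by positivity
          field_simp
        rw [h2]
      · push_neg at hex
        rw [dens_zero N x t hex]
        rw [Finset.sum_eq_zero]
        · norm_num
        · intro k hk
          exact Set.indicator_of_notMem (hex k (Finset.mem_range.mp hk)) _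
    rw [hgval]
    have hInteg : ∀ i ∈ Finset.range N, Integrable
        (Set.indicator (Set.Ico (x t i) (x t (i+1)))
          (fun w =>
            (φ' (1 / ((N:ℝ) * (x t (i+1) - x t i))) * (1 / ((N:ℝ) * (x t (i+1) - x t i)))
              - φ (1 / ((N:ℝ) * (x t (i+1) - x t i)))) *
            (Hfun ε N (x t) w - 1 / ((N:ℝ) * (x t (i+1) - x t i))))) := by
      intro i _
      refine MeasureTheory.IntegrableOn.integrable_indicator ?_ measurableSet_Ico
      refine MeasureTheory.IntegrableOn.mono_set ?_ Set.Ico_subset_Icc_self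
      exact (continuous_const.mul
        ((hfun_continuous ε hε N (x t)).sub continuous_const)).integrableOn_Icc
    rw [MeasureTheory.integral_finset_sum _ hInteg, Finset.mul_sum]
    refine Finset.sum_congr rfl fun i hi => ?_
    have hiN := Finset.mem_range.mp hi
    have hdpos : 0 < x t (i+1) - x t i := sub_pos.mpr (hmono i hiN)
    have hcont : Continuous (Hfun ε N (x t)) := hfun_continuous ε hε N (x t)
    rw [MeasureTheory.integral_indicator measurableSet_Ico,
      MeasureTheory.integral_Ico_eq_integral_Ioo,
      ← MeasureTheory.integral_Ioc_eq_integral_Ioo,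
      ← intervalIntegral.integral_of_le (hmono i hiN).le,
      intervalIntegral.integral_const_mul,
      intervalIntegral.integral_sub (hcont.intervalIntegrable _ _)
        (intervalIntegrable_const),
      intervalIntegral.integral_const, smul_eq_mul]
    have hIH : (∫ y in x t i..x t (i+1), Hfun ε N (x t) y)
        = ε ^ 2 * (particleRHS ε N (x t) i - particleRHS ε N (x t) (i+1))
          + (1 / ((N:ℝ) * (x t (i+1) - x t i))) * (x t (i+1) - x t i) := by
      linarith [strip ε hε N (x t) hmono i hiN]
    rw [hIH]
    have hNpos : (0:ℝ) < (N:ℝ) := by positivity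
    simp only [one_div]
    field_simp
    ring
  rw [hval]
  exact HasDerivWithinAt.fun_sum hsummand
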